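/- Let F be an infinite field, n ≥ 2, and let g = (V,[,]) be an n-dimensional F-algebra for which there exists x ∈ V with [x,x] ∉ span_F(x). Then g degenerates to d_n, the algebra with basis (v_1,...,v_n) whose only nonzero basis product is [v_1,v_1] = v_2. -/

import Mathlib

open scoped BigOperators

/-- Change-of-basis action of `GL(n,F)` on structure vectors in `F^(n³)`. -/
def actSV {F : Type*} [Field F] {n : ℕ} (g : GL (Fin n) F)
    (lam : Fin n → Fin n → Fin n → F) : Fin n → Fin n → Fin n → F :=
  fun a b c => ∑ i, ∑ j, ∑ k,
    (g : Matrix (Fin n) (Fin n) F) i a * (g : Matrix (Fin n) (Fin n) F) j b *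
      ((g⁻¹ : GL (Fin n) F) : Matrix (Fin n) (Fin n) F) c k * lam i j k

/-- The `GL(n,F)`-orbit of a structure vector. -/
def orbitSV {F : Type*} [Field F] {n : ℕ} (lam : Fin n → Fin n → Fin n → F) :
    Set (Fin n → Fin n → Fin n → F) :=
  {mu | ∃ g : GL (Fin n) F, mu = actSV g lam}

/-- Zariski closure of a set of structure vectors: the common zero locus of all
polynomials vanishing on the set. -/
def zClosure {F : Type*} [Field F] {n : ℕ} (S : Set (Fin n → Fin n → Fin n → F)) :
    Set (Fin n → Fin n → Fin n → F) :=
  {mu | ∀ p : MvPolynomial (Fin n × Fin n × Fin n) F,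
      (∀ lam ∈ S, MvPolynomial.eval (fun t => lam t.1 t.2.1 t.2.2) p = 0) →
      MvPolynomial.eval (fun t => mu t.1 t.2.1 t.2.2) p = 0}

/-- Collapse of a triple sum against two diagonal matrices. -/
lemma sum3_diag {F : Type*} [Field F] {n : ℕ} (d d' : Fin n → F)
    (lam : Fin n → Fin n → Fin n → F) (a b c : Fin n) :
    (∑ i, ∑ j, ∑ k, Matrix.diagonal d i a * Matrix.diagonal d j b *
        Matrix.diagonal d' c k * lam i j k)
      = d a * d b * (d' c * lam a b c) := by
  simp [Matrix.diagonal_apply, ite_mul, mul_ite, Finset.sum_ite_eq, Finset.sum_ite_eq',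
    mul_assoc]

/-- A pair `x`, `w` with `w ∉ span {x}` extends to a basis indexed by `Fin n`,
with `x` in position `0` and `w` in position `1`. -/
lemma basis_with_pair {F V : Type*} [Field F]
    [AddCommGroup V] [Module F V] [FiniteDimensional F V]
    {n : ℕ} (hn : 1 < n) (hV : Module.finrank F V = n)
    {x w : V} (hxspan : w ∉ Submodule.span F {x}) (hxne : x ≠ 0) :
    ∃ b : Module.Basis (Fin n) F V, b ⟨0, by omega⟩ = x ∧ b ⟨1, by omega⟩ = w := by
  classical
  have hli2 : LinearIndependent F ![w, x] := by
    rw [linearIndependent_fin2]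
    refine ⟨by simpa using hxne, fun a ha => hxspan ?_⟩
    simp only [Matrix.cons_val_one, Matrix.head_cons, Matrix.cons_val_zero] at ha
    exact ha ▸ Submodule.smul_mem _ a (Submodule.mem_span_singleton_self x)
  have hset : Set.range ![w, x] = {x, w} := by
    ext v
    simp [Fin.exists_fin_two, or_comm, eq_comm]
  have hli : LinearIndepOn F id ({x, w} : Set V) := by
    rw [← hset]; exact (linearIndepOn_id_range_iff hli2.injective).mpr hli2
  set ι := hli.extend (Set.subset_univ _) with hι
  let bs : Module.Basis ι F V := Module.Basis.extend hli
  haveI : Fintype ι := FiniteDimensional.fintypeBasisIndex bs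
  have hcard : Fintype.card (Fin n) = Fintype.card ι := by
    rw [Fintype.card_fin, ← hV, Module.finrank_eq_card_basis bs]
  have hxmem : x ∈ ι := hli.subset_extend _ (by simp)
  have hwmem : w ∈ ι := hli.subset_extend _ (by simp)
  have hxw : x ≠ w := fun h => hxspan (h ▸ Submodule.mem_span_singleton_self x)
  set a0 : ι := ⟨x, hxmem⟩ with ha0
  set b0 : ι := ⟨w, hwmem⟩ with hb0
  have hab : a0 ≠ b0 := by simpa [ha0, hb0, Subtype.ext_iff] using hxw
  set z : Fin n := ⟨0, by omega⟩ with hz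
  set o : Fin n := ⟨1, by omega⟩ with ho
  have hzo : z ≠ o := by simp [hz, ho, Fin.ext_iff]
  let e0 : Fin n ≃ ι := Fintype.equivOfCardEq hcard
  let e1 : Fin n ≃ ι := e0.trans (Equiv.swap (e0 z) a0)
  have he1z : e1 z = a0 := by simp [e1]
  let e2 : Fin n ≃ ι := e1.trans (Equiv.swap (e1 o) b0)
  have he2o : e2 o = b0 := by simp [e2]
  have he2z : e2 z = a0 := by
    show Equiv.swap (e1 o) b0 (e1 z) = a0
    rw [he1z, Equiv.swap_apply_of_ne_of_ne]
    · rw [← he1z]; exact fun h => hzo (e1.injective h)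
    · exact hab
  refine ⟨bs.reindex e2.symm, ?_, ?_⟩
  · rw [Module.Basis.reindex_apply, Equiv.symm_symm]
    show bs (e2 z) = x
    rw [he2z]; exact Module.Basis.extend_apply_self hli a0
  · rw [Module.Basis.reindex_apply, Equiv.symm_symm]
    show bs (e2 o) = w
    rw [he2o]; exact Module.Basis.extend_apply_self hli b0

set_option maxHeartbeats 1000000 in
/-- over an infinite field, an `n`-dimensional algebra (`n ≥ 2`)
possessing an element `x` with `[x,x] ∉ span{x}` degenerates to `d_n` (the algebra whose
only nonzero basis product is `[v₁,v₁] = v₂`): the structure vector `δ_n` lies in the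
Zariski closure of the orbit of any structure vector of the algebra. -/
theorem degeneration_to_dn {F V : Type*} [Field F] [Infinite F]
    [AddCommGroup V] [Module F V] [FiniteDimensional F V]
    {n : ℕ} (hn : 2 ≤ n) (hV : Module.finrank F V = n)
    (B : V →ₗ[F] V →ₗ[F] V)
    (hx : ∃ x : V, B x x ∉ Submodule.span F {x})
    (delta : Fin n → Fin n → Fin n → F)
    (hdelta : ∀ i j k : Fin n,
      delta i j k =
        if i = (⟨0, by omega⟩ : Fin n) ∧ j = (⟨0, by omega⟩ : Fin n) ∧
            k = (⟨1, by omega⟩ : Fin n) then 1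
        else 0) :
    ∃ lam : Fin n → Fin n → Fin n → F,
      (∃ b : Module.Basis (Fin n) F V, ∀ i j, B (b i) (b j) = ∑ k, lam i j k • b k) ∧
      delta ∈ zClosure (orbitSV lam) := by
  classical
  obtain ⟨x, hxspan⟩ := hx
  have hxne : x ≠ 0 := by
    rintro rfl
    exact hxspan (by simp)
  obtain ⟨b, hbz0, hbo0⟩ := basis_with_pair hn hV hxspan hxne
  set z : Fin n := ⟨0, by omega⟩ with hzdef
  set o : Fin n := ⟨1, by omega⟩ with hodef
  have hzo : z ≠ o := by simp [hzdef, hodef, Fin.ext_iff]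
  have hbz : b z = x := hbz0
  have hbo : b o = B x x := hbo0
  set lam : Fin n → Fin n → Fin n → F := fun i j k => b.repr (B (b i) (b j)) k with hlamdef
  have hdelta' : ∀ i j k : Fin n, delta i j k = if i = z ∧ j = z ∧ k = o then 1 else 0 :=
    hdelta
  refine ⟨lam, ⟨b, fun i j => (b.sum_repr _).symm⟩, ?_⟩
  have hlam00 : ∀ k, lam z z k = if k = o then 1 else 0 := by
    intro k
    have hb1 : B (b z) (b z) = b o := by rw [hbz, hbo]
    show b.repr (B (b z) (b z)) k = _
    rw [hb1, Module.Basis.repr_self]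
    simp [Finsupp.single_apply, eq_comm]
  -- the weights
  set q : Fin n → ℕ := fun i => if i = z then 1 else 2 with hqdef
  have hq0 : ∀ a c e : Fin n, (q a + q c - q e = 0) ↔ (a = z ∧ c = z ∧ e ≠ z) := by
    intro a c e
    by_cases ha : a = z <;> by_cases hc : c = z <;> by_cases he : e = z <;>
      simp [hqdef, ha, hc, he]
  have hqle : ∀ a c e : Fin n, q e ≤ q a + q c := by
    intro a c e
    by_cases ha : a = z <;> by_cases hc : c = z <;> by_cases he : e = z <;>
      simp [hqdef, ha, hc, he]
  -- orbit membership of the curve at nonzero parameters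
  have horb : ∀ t : F, t ≠ 0 →
      (fun a c e => lam a c e * t ^ (q a + q c - q e)) ∈ orbitSV lam := by
    intro t ht
    set d : Fin n → F := fun i => if i = z then t else t ^ 2 with hddef
    have hdne : ∀ i, d i ≠ 0 := by
      intro i
      by_cases h : i = z <;> simp [hddef, h, ht, pow_ne_zero]
    have hdt : ∀ i, d i = t ^ q i := by
      intro i
      by_cases h : i = z <;> simp [hddef, hqdef, h]
    refine ⟨⟨Matrix.diagonal d, Matrix.diagonal fun i => (d i)⁻¹,
      by rw [Matrix.diagonal_mul_diagonal]
         have : (fun i => d i * (d i)⁻¹) = fun _ => (1 : F) :=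
           funext fun i => mul_inv_cancel₀ (hdne i)
         rw [this, Matrix.diagonal_one],
      by rw [Matrix.diagonal_mul_diagonal]
         have : (fun i => (d i)⁻¹ * d i) = fun _ => (1 : F) :=
           funext fun i => inv_mul_cancel₀ (hdne i)
         rw [this, Matrix.diagonal_one]⟩, ?_⟩
    funext a c e
    show lam a c e * t ^ (q a + q c - q e)
      = ∑ i, ∑ j, ∑ k, Matrix.diagonal d i a * Matrix.diagonal d j c *
          Matrix.diagonal (fun i => (d i)⁻¹) e k * lam i j k
    rw [sum3_diag, hdt, hdt, hdt]
    have hpow : t ^ (q a + q c - q e) * t ^ q e = t ^ q a * t ^ q c := by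
      rw [← pow_add, ← pow_add]
      congr 1
      have := hqle a c e
      omega
    have hte : (t : F) ^ q e ≠ 0 := pow_ne_zero _ ht
    field_simp
    linear_combination lam a c e * hpow
  -- the value of the curve at 0 is delta
  have hfinal : ∀ a c e : Fin n, lam a c e * (0 : F) ^ (q a + q c - q e) = delta a c e := by
    intro a c e
    rw [hdelta' a c e]
    by_cases hm : q a + q c - q e = 0
    · rw [hm, pow_zero, mul_one]
      obtain ⟨ha, hc, he⟩ := (hq0 a c e).mp hm
      subst ha; subst hc
      rw [hlam00 e]
      by_cases heo : e = o <;> simp [heo]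
    · rw [zero_pow hm, mul_zero, eq_comm, ite_eq_right_iff]
      rintro ⟨rfl, rfl, rfl⟩
      exfalso
      exact hm ((hq0 _ _ _).mpr ⟨rfl, rfl, fun h => hzo h.symm⟩)
  -- the Zariski-closure argument
  intro p hp
  set f : Fin n × Fin n × Fin n → Polynomial F :=
    fun s => Polynomial.C (lam s.1 s.2.1 s.2.2) *
      Polynomial.X ^ (q s.1 + q s.2.1 - q s.2.2) with hfdef
  set P : Polynomial F := MvPolynomial.eval₂ Polynomial.C f p with hPdef
  have heval : ∀ t : F, Polynomial.eval t P
      = MvPolynomial.eval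
          (fun s : Fin n × Fin n × Fin n =>
            lam s.1 s.2.1 s.2.2 * t ^ (q s.1 + q s.2.1 - q s.2.2)) p := by
    intro t
    have h := MvPolynomial.eval₂_comp_left (Polynomial.evalRingHom t) Polynomial.C f p
    simp only [Polynomial.coe_evalRingHom] at h
    rw [hPdef, h]
    have hcomp : (Polynomial.evalRingHom t).comp Polynomial.C = RingHom.id F := by
      ext a; simp
    rw [hcomp]
    have : (Polynomial.eval t ∘ f)
        = fun s : Fin n × Fin n × Fin n =>
            lam s.1 s.2.1 s.2.2 * t ^ (q s.1 + q s.2.1 - q s.2.2) := by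
      funext s; simp [hfdef]
    rw [this]
    rfl
  have hzero : ∀ t : F, t ≠ 0 → Polynomial.eval t P = 0 := by
    intro t ht
    rw [heval]
    exact hp (fun a c e => lam a c e * t ^ (q a + q c - q e)) (horb t ht)
  have hP0 : P = 0 := by
    apply Polynomial.eq_zero_of_infinite_isRoot
    apply Set.Infinite.mono (s := {t : F | t ≠ 0})
    · intro t ht
      exact hzero t ht
    · exact Set.Finite.infinite_compl (Set.finite_singleton 0)
  have h0 := heval 0
  rw [hP0, Polynomial.eval_zero] at h0
  have hfun : (fun s : Fin n × Fin n × Fin n => delta s.1 s.2.1 s.2.2)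
      = fun s : Fin n × Fin n × Fin n =>
          lam s.1 s.2.1 s.2.2 * (0 : F) ^ (q s.1 + q s.2.1 - q s.2.2) :=
    funext fun s => (hfinal _ _ _).symm
  rw [hfun]
  exact h0.symm
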